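/- A positive linear map Λ: M_n(ℂ) → M_m(ℂ) is k-positive if and only if (1_n ⊗ Λ)(|ψ⟩⟨ψ|) ≥ 0 for all vectors |ψ⟩ ∈ ℂ^n ⊗ ℂ^n of Schmidt rank at most k. -/

import Mathlib

open scoped BigOperators ComplexOrder

/-- The ampliation `1_k ⊗ Λ` of a linear map `Λ : M_n(ℂ) → M_m(ℂ)`, acting on
matrices on `ℂ^k ⊗ ℂ^n` blockwise. -/
def amp (k n m : ℕ)
    (Λ' : Matrix (Fin n) (Fin n) ℂ →ₗ[ℂ] Matrix (Fin m) (Fin m) ℂ)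
    (M : Matrix (Fin k × Fin n) (Fin k × Fin n) ℂ) :
    Matrix (Fin k × Fin m) (Fin k × Fin m) ℂ :=
  Matrix.of fun p q => Λ' (Matrix.of fun r s => M (p.1, r) (q.1, s)) p.2 q.2

lemma outer_psd {ι : Type*} [Fintype ι] [DecidableEq ι] (ψ : ι → ℂ) :
    (Matrix.of fun x y => ψ x * star (ψ y)).PosSemidef := by
  rw [Matrix.posSemidef_iff_dotProduct_mulVec]
  constructor
  · ext x y
    simp [Matrix.conjTranspose_apply, mul_comm]
  · intro x
    have h : dotProduct (star x)
          (Matrix.mulVec (Matrix.of fun a b => ψ a * star (ψ b)) x)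
        = star (∑ i, star (ψ i) * x i) * (∑ i, star (ψ i) * x i) := by
      simp only [dotProduct, Matrix.mulVec, Matrix.of_apply, Pi.star_apply,
        star_sum, star_mul, star_star, Finset.mul_sum, Finset.sum_mul]
      rw [Finset.sum_comm]
      refine Finset.sum_congr rfl fun i _ => Finset.sum_congr rfl fun j _ => by ring
    rw [h]
    exact star_mul_self_nonneg _

open Matrix in
lemma amp_congr (n m k₁ k₂ : ℕ)
    (Λ' : Matrix (Fin n) (Fin n) ℂ →ₗ[ℂ] Matrix (Fin m) (Fin m) ℂ)
    (ψ : Fin k₁ × Fin n → ℂ) (χ : Fin k₂ × Fin n → ℂ) (d : Fin k₁ → Fin k₂ → ℂ)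
    (h : ∀ a s, ψ (a, s) = ∑ t, d a t * χ (t, s))
    (D : Matrix (Fin k₁ × Fin m) (Fin k₂ × Fin m) ℂ)
    (hD : ∀ a p t q, D (a, p) (t, q) = d a t * (if p = q then (1 : ℂ) else 0)) :
    amp k₁ n m Λ' (Matrix.of fun x y => ψ x * star (ψ y)) =
      D * amp k₂ n m Λ' (Matrix.of fun x y => χ x * star (χ y)) * Dᴴ := by
  ext ⟨a, p⟩ ⟨b, q⟩
  have key : (Matrix.of fun r r' => ψ (a, r) * star (ψ (b, r'))
        : Matrix (Fin n) (Fin n) ℂ)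
      = ∑ t, ∑ s, (d a t * star (d b s)) •
          (Matrix.of fun r r' => χ (t, r) * star (χ (s, r'))
            : Matrix (Fin n) (Fin n) ℂ) := by
    ext r r'
    simp only [Matrix.of_apply, h, Matrix.sum_apply, Matrix.smul_apply, smul_eq_mul,
      star_sum, star_mul', Finset.sum_mul, Finset.mul_sum]
    rw [Finset.sum_comm]
    refine Finset.sum_congr rfl fun t _ => Finset.sum_congr rfl fun s _ => by ring
  have lhs : amp k₁ n m Λ' (Matrix.of fun x y => ψ x * star (ψ y)) (a, p) (b, q)
      = ∑ t, ∑ s, (d a t * star (d b s)) *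
          Λ' (Matrix.of fun r r' => χ (t, r) * star (χ (s, r'))) p q := by
    show Λ' (Matrix.of fun r r' => ψ (a, r) * star (ψ (b, r'))) p q = _
    rw [key, map_sum]
    simp only [map_sum, _root_.map_smul, Matrix.sum_apply, Matrix.smul_apply, smul_eq_mul]
  rw [lhs]
  have rhs : (D * amp k₂ n m Λ' (Matrix.of fun x y => χ x * star (χ y)) * Dᴴ) (a, p) (b, q)
      = ∑ t, ∑ s, (d a t * star (d b s)) *
          amp k₂ n m Λ' (Matrix.of fun x y => χ x * star (χ y)) (t, p) (s, q) := by
    simp only [Matrix.mul_apply, Matrix.conjTranspose_apply, hD, Fintype.sum_prod_type,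
      star_mul', ite_mul, mul_ite, one_mul, zero_mul, mul_one, mul_zero,
      star_one, star_zero, apply_ite (star : ℂ → ℂ), Finset.sum_ite_eq, Finset.sum_ite_eq', Finset.mem_univ,
      if_true, Finset.sum_mul, Finset.mul_sum]
    rw [Finset.sum_comm]
    refine Finset.sum_congr rfl fun t _ => Finset.sum_congr rfl fun s _ => by ring
  rw [rhs]
  rfl

lemma amp_sum (k n m : ℕ)
    (Λ' : Matrix (Fin n) (Fin n) ℂ →ₗ[ℂ] Matrix (Fin m) (Fin m) ℂ)
    {ι : Type*} (s : Finset ι) (f : ι → Matrix (Fin k × Fin n) (Fin k × Fin n) ℂ) :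
    amp k n m Λ' (∑ i ∈ s, f i) = ∑ i ∈ s, amp k n m Λ' (f i) := by
  ext ⟨a, p⟩ ⟨b, q⟩
  show Λ' (Matrix.of fun r r' => (∑ i ∈ s, f i) (a, r) (b, r')) p q = _
  have : (Matrix.of fun r r' => (∑ i ∈ s, f i) (a, r) (b, r')
        : Matrix (Fin n) (Fin n) ℂ)
      = ∑ i ∈ s, Matrix.of fun r r' => f i (a, r) (b, r') := by
    ext r r'
    simp [Matrix.sum_apply]
  rw [this, map_sum, Matrix.sum_apply]
  rw [Matrix.sum_apply]
  rfl

lemma psd_sum {ι N : Type*} [Fintype N] [DecidableEq N]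
    (s : Finset ι) (f : ι → Matrix N N ℂ) (h : ∀ i ∈ s, (f i).PosSemidef) :
    (∑ i ∈ s, f i).PosSemidef := by
  classical
  induction s using Finset.induction_on with
  | empty => simpa using Matrix.PosSemidef.zero
  | insert _ _ hni ih =>
    rw [Finset.sum_insert hni]
    exact ((h _ (Finset.mem_insert_self _ _)).add
      (ih fun i hi => h i (Finset.mem_insert_of_mem hi)))

lemma backward_core (n m k : ℕ)
    (Λ' : Matrix (Fin n) (Fin n) ℂ →ₗ[ℂ] Matrix (Fin m) (Fin m) ℂ)
    (h : ∀ ψ : Fin n × Fin n → ℂ,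
        (∃ u w : Fin k → Fin n → ℂ,
            ψ = fun p => ∑ t : Fin k, u t p.1 * w t p.2) →
        (amp n n m Λ' (Matrix.of fun x y => ψ x * star (ψ y))).PosSemidef)
    (ψ : Fin k × Fin n → ℂ) :
    (amp k n m Λ' (Matrix.of fun x y => ψ x * star (ψ y))).PosSemidef := by
  by_cases hkn : k ≤ n
  · -- pad ψ into an n × n array
    set χ : Fin n × Fin n → ℂ :=
      fun p => if hp : (p.1 : ℕ) < k then ψ (⟨p.1, hp⟩, p.2) else 0 with hχdef
    set d : Fin k → Fin n → ℂ :=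
      fun a i => if (i : ℕ) = (a : ℕ) then 1 else 0 with hddef
    have hsum : ∀ a s, ψ (a, s) = ∑ i, d a i * χ (i, s) := by
      intro a s
      have ha : (a : ℕ) < n := lt_of_lt_of_le a.isLt hkn
      rw [Finset.sum_eq_single (⟨(a : ℕ), ha⟩ : Fin n)]
      · simp [hddef, hχdef, a.isLt]
      · intro i _ hi
        have : (i : ℕ) ≠ (a : ℕ) := fun hia => hi (Fin.ext hia)
        simp [hddef, this]
      · simp
    have hschmidt : ∃ u w : Fin k → Fin n → ℂ,
        χ = fun p => ∑ t : Fin k, u t p.1 * w t p.2 := by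
      refine ⟨fun t i => if (i : ℕ) = (t : ℕ) then 1 else 0, fun t s => ψ (t, s), ?_⟩
      funext p
      rcases p with ⟨i, s⟩
      show (if hp : (i : ℕ) < k then ψ (⟨i, hp⟩, s) else 0)
        = ∑ t : Fin k, (if (i : ℕ) = (t : ℕ) then (1:ℂ) else 0) * ψ (t, s)
      split_ifs with hik
      · rw [Finset.sum_eq_single (⟨(i : ℕ), hik⟩ : Fin k)]
        · simp
        · intro t _ ht
          have : (i : ℕ) ≠ (t : ℕ) := fun hit => ht (Fin.ext hit.symm)
          simp [this]
        · simp
      · refine (Finset.sum_eq_zero fun t _ => ?_).symm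
        have : (i : ℕ) ≠ (t : ℕ) := by
          push_neg at hik
          exact fun hit => absurd (hit ▸ t.isLt) (not_lt.mpr hik)
        simp [this]
    rw [amp_congr n m k n Λ' ψ χ d hsum
      (Matrix.of fun p q => d p.1 q.1 * (if p.2 = q.2 then (1 : ℂ) else 0))
      (fun a p t q => rfl)]
    exact (h χ hschmidt).mul_mul_conjTranspose_same _
  · push_neg at hkn
    set χ : Fin n × Fin n → ℂ :=
      fun p => if p.1 = p.2 then 1 else 0 with hχdef
    set d : Fin k → Fin n → ℂ := fun a i => ψ (a, i) with hddef
    have hsum : ∀ a s, ψ (a, s) = ∑ i, d a i * χ (i, s) := by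
      intro a s
      simp [hddef, hχdef, mul_ite, Finset.sum_ite_eq']
    have hschmidt : ∃ u w : Fin k → Fin n → ℂ,
        χ = fun p => ∑ t : Fin k, u t p.1 * w t p.2 := by
      refine ⟨fun t i => if (i : ℕ) = (t : ℕ) then 1 else 0,
              fun t s => if (s : ℕ) = (t : ℕ) then 1 else 0, ?_⟩
      funext p
      rcases p with ⟨i, s⟩
      show (if i = s then (1:ℂ) else 0)
        = ∑ t : Fin k, (if (i : ℕ) = (t : ℕ) then (1:ℂ) else 0) *
            (if (s : ℕ) = (t : ℕ) then (1:ℂ) else 0)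
      have hik : (i : ℕ) < k := lt_trans i.isLt hkn
      rw [Finset.sum_eq_single (⟨(i : ℕ), hik⟩ : Fin k)]
      · by_cases his : i = s
        · simp [his]
        · have : (s : ℕ) ≠ (i : ℕ) := fun hsi => his (Fin.ext hsi.symm)
          simp [his, this]
      · intro t _ ht
        have : (i : ℕ) ≠ (t : ℕ) := fun hit => ht (Fin.ext hit.symm)
        simp [this]
      · simp
    rw [amp_congr n m k n Λ' ψ χ d hsum
      (Matrix.of fun p q => d p.1 q.1 * (if p.2 = q.2 then (1 : ℂ) else 0))
      (fun a p t q => rfl)]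
    exact (h χ hschmidt).mul_mul_conjTranspose_same _

/-- A positive linear map `Λ : M_n(ℂ) → M_m(ℂ)` is `k`-positive
iff `(1_n ⊗ Λ)(|ψ⟩⟨ψ|) ≥ 0` for all vectors `ψ ∈ ℂ^n ⊗ ℂ^n` of Schmidt rank
at most `k` (i.e. sums of `k` product vectors). -/
theorem stmt_15 (n m k : ℕ)
    (Λ' : Matrix (Fin n) (Fin n) ℂ →ₗ[ℂ] Matrix (Fin m) (Fin m) ℂ)
    (hpos : ∀ X : Matrix (Fin n) (Fin n) ℂ, X.PosSemidef → (Λ' X).PosSemidef) :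
    (∀ M : Matrix (Fin k × Fin n) (Fin k × Fin n) ℂ,
        M.PosSemidef → (amp k n m Λ' M).PosSemidef)
    ↔ (∀ ψ : Fin n × Fin n → ℂ,
        (∃ u w : Fin k → Fin n → ℂ,
            ψ = fun p => ∑ t : Fin k, u t p.1 * w t p.2) →
        (amp n n m Λ' (Matrix.of fun x y => ψ x * star (ψ y))).PosSemidef) := by
  constructor
  · rintro h ψ ⟨u, w, hψ⟩
    have hsum : ∀ (a : Fin n) (s : Fin n),
        ψ (a, s) = ∑ t : Fin k, (fun i t => u t i) a t * (fun p : Fin k × Fin n => w p.1 p.2) (t, s) := by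
      intro a s
      rw [hψ]
    rw [amp_congr n m n k Λ' ψ (fun p => w p.1 p.2) (fun i t => u t i) hsum
      (Matrix.of fun p q => u q.1 p.1 * (if p.2 = q.2 then (1 : ℂ) else 0))
      (fun a p t q => rfl)]
    exact (h _ (outer_psd _)).mul_mul_conjTranspose_same _
  · intro h M hM
    obtain ⟨B, hB⟩ : ∃ B : Matrix (Fin k × Fin n) (Fin k × Fin n) ℂ, M = B.conjTranspose * B := by
      open MatrixOrder in
      obtain ⟨B, hB⟩ := CStarAlgebra.nonneg_iff_eq_star_mul_self.mp hM.nonneg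
      exact ⟨B, hB⟩
    have hMsum : M = ∑ i : Fin k × Fin n,
        Matrix.of fun x y => star (B i x) * star (star (B i y)) := by
      ext x y
      rw [hB]
      simp [Matrix.mul_apply, Matrix.conjTranspose_apply, Matrix.sum_apply]
    rw [hMsum, amp_sum]
    refine psd_sum _ _ fun i _ => ?_
    exact backward_core n m k Λ' h (fun z => star (B i z))
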